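/- Let 𝒢_ω = lim←(∗_{i<n} ℤ_i, p^m_n : n ≤ m) be the unrestricted free product, i.e., the inverse limit of the free products ∗_{i<n} ℤ_i of copies ℤ_i of ℤ along the canonical projections p^m_n : ∗_{i<m} ℤ_i → ∗_{i<n} ℤ_i (which kill the generators δ_i for n ≤ i < m). Then for every homomorphism h : 𝒢_ω → ℱ to a free group ℱ, there exist m ∈ ω and a homomorphism h̄ : ∗_{i<m} ℤ_i → ℱ such that h = h̄ ∘ p_m, where p_m : 𝒢_ω → ∗_{i<m} ℤ_i is the canonical projection. -/

import Mathlib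

noncomputable section

/-- The canonical projection `p^m_n : ∗_{i<m} ℤ_i → ∗_{i<n} ℤ_i` (the free product of `m`
copies of `ℤ` is the free group on `m` generators), killing the generators `δ_i`, `n ≤ i < m`. -/
def freeProj (n m : ℕ) : FreeGroup (Fin m) →* FreeGroup (Fin n) :=
  FreeGroup.lift fun i => if h : (i : ℕ) < n then FreeGroup.of (⟨i, h⟩ : Fin n) else 1

/-- The unrestricted free product `𝒢_ω = lim← (∗_{i<n} ℤ_i, p^m_n)`, realized as the
subgroup of the product `Π n, ∗_{i<n} ℤ_i` of threads of the inverse system. -/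
def GOmega : Subgroup ((n : ℕ) → FreeGroup (Fin n)) where
  carrier := {g | ∀ (n m : ℕ), n ≤ m → freeProj n m (g m) = g n}
  one_mem' := by
    intro n m _
    simp only [Pi.one_apply, map_one]
  mul_mem' := by
    intro a b ha hb n m h
    simp only [Pi.mul_apply, map_mul, ha n m h, hb n m h]
  inv_mem' := by
    intro a ha n m h
    simp only [Pi.inv_apply, map_inv, ha n m h]

/-- The canonical projection `p_m : 𝒢_ω → ∗_{i<m} ℤ_i`. -/
def projG (m : ℕ) : GOmega →* FreeGroup (Fin m) :=
  (Pi.evalMonoidHom (fun n => FreeGroup (Fin n)) m).comp GOmega.subtype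


namespace HigmanAux

open FreeGroup List

set_option linter.unusedSectionVars false

variable {α : Type*} [DecidableEq α]

/-- The "no cancellation" relation between adjacent letters. -/
def NR (p q : α × Bool) : Prop := ¬(p.1 = q.1 ∧ q.2 = !p.2)

/-- A word is reduced. -/
def IsRed (L : List (α × Bool)) : Prop := List.IsChain NR L

lemma isRed_infix {L L' : List (α × Bool)} (h : IsRed L) (h' : L' <:+: L) : IsRed L' :=
  List.IsChain.infix h h'

lemma isRed_no_pattern {L L₂ L₃ : List (α × Bool)} {x : α} {b : Bool}
    (h : IsRed L) (e : L = L₂ ++ (x, b) :: (x, !b) :: L₃) : False := by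
  have hinf : [(x, b), (x, !b)] <:+: L := ⟨L₂, L₃, by simp [e]⟩
  have := isRed_infix h hinf
  have h2 : NR (x, b) (x, !b) := (List.isChain_cons_cons.mp this).1
  exact h2 ⟨rfl, rfl⟩

lemma exists_pattern_of_not_isRed {L : List (α × Bool)} (h : ¬ IsRed L) :
    ∃ (L₂ L₃ : List (α × Bool)) (x : α) (b : Bool), L = L₂ ++ (x, b) :: (x, !b) :: L₃ := by
  induction L with
  | nil => exact absurd List.isChain_nil h
  | cons p t ih =>
    match t, ih with
    | [], _ => exact absurd (List.isChain_singleton p) h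
    | q :: t, ih =>
      rw [IsRed, List.isChain_cons_cons] at h
      push_neg at h
      by_cases hpq : NR p q
      · obtain ⟨L₂, L₃, x, b, e⟩ := ih (h hpq)
        exact ⟨p :: L₂, L₃, x, b, by simp [e]⟩
      · unfold NR at hpq
        push_neg at hpq
        obtain ⟨h1, h2⟩ := hpq
        refine ⟨[], t, p.1, p.2, ?_⟩
        have : q = (p.1, !p.2) := Prod.ext h1.symm h2
        simp [this]

lemma reduce_eq_self_of_isRed {L : List (α × Bool)} (h : IsRed L) : reduce L = L := by
  have hred : Red L (reduce L) := reduce.red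
  rcases Relation.ReflTransGen.cases_head hred with heq | ⟨M, hstep, _⟩
  · exact heq.symm
  · cases hstep with
    | not => exact (isRed_no_pattern h rfl).elim

lemma isRed_reduce (L : List (α × Bool)) : IsRed (reduce L) := by
  by_contra h
  obtain ⟨L₂, L₃, x, b, e⟩ := exists_pattern_of_not_isRed h
  exact reduce.not e

lemma isRed_toWord (x : FreeGroup α) : IsRed x.toWord := by
  have := isRed_reduce x.toWord
  rwa [reduce_toWord] at this

lemma toWord_mk_of_isRed {L : List (α × Bool)} (h : IsRed L) : (mk L).toWord = L := by
  rw [toWord_mk, reduce_eq_self_of_isRed h]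

lemma norm_eq_toWord_length (x : FreeGroup α) : norm x = x.toWord.length := rfl

/-- k-fold concatenation of a word. -/
def powWord (L : List (α × Bool)) (k : ℕ) : List (α × Bool) := (List.replicate k L).flatten

lemma mk_powWord (L : List (α × Bool)) (k : ℕ) : mk (powWord L k) = (mk L) ^ k :=
  (FreeGroup.pow_mk k).symm

lemma powWord_length (L : List (α × Bool)) (k : ℕ) : (powWord L k).length = k * L.length := by
  simp [powWord]

lemma powWord_succ (L : List (α × Bool)) (k : ℕ) :
    powWord L (k + 1) = L ++ powWord L k := by
  simp [powWord, List.replicate_succ]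

lemma powWord_succ' (L : List (α × Bool)) (k : ℕ) :
    powWord L (k + 1) = powWord L k ++ L := by
  simp [powWord, List.replicate_succ']

lemma powWord_ne_nil {L : List (α × Bool)} (hL : L ≠ []) {k : ℕ} (hk : 1 ≤ k) :
    powWord L k ≠ [] := by
  obtain ⟨k, rfl⟩ := Nat.exists_eq_add_of_le hk
  rw [add_comm, powWord_succ]
  simp [hL]

lemma head?_powWord {L : List (α × Bool)} (hL : L ≠ []) {k : ℕ} (hk : 1 ≤ k) :
    (powWord L k).head? = L.head? := by
  obtain ⟨k, rfl⟩ := Nat.exists_eq_add_of_le hk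
  rw [add_comm, powWord_succ, List.head?_append_of_ne_nil _ hL]

lemma getLast?_powWord {L : List (α × Bool)} (hL : L ≠ []) {k : ℕ} (hk : 1 ≤ k) :
    (powWord L k).getLast? = L.getLast? := by
  obtain ⟨k, rfl⟩ := Nat.exists_eq_add_of_le hk
  rw [add_comm, powWord_succ', List.getLast?_append_of_ne_nil _ hL]

lemma isRed_powWord {L : List (α × Bool)} (hred : IsRed L)
    (hcyc : ∀ p ∈ L.getLast?, ∀ q ∈ L.head?, NR p q) (k : ℕ) :
    IsRed (powWord L k) := by
  by_cases hL : L = []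
  · subst hL
    simp [powWord, IsRed]
  · rw [IsRed, powWord, List.isChain_flatten (by simp [eq_comm, hL])]
    constructor
    · intro l hl
      rw [List.eq_of_mem_replicate hl]
      exact hred
    · -- Chain' of junction relation on replicate
      induction k with
      | zero => simp
      | succ k ih =>
        rw [List.replicate_succ]
        cases k with
        | zero => simp
        | succ k =>
          rw [List.replicate_succ]
          refine List.isChain_cons_cons.mpr ⟨hcyc, ?_⟩
          rw [← List.replicate_succ]
          exact ih

lemma invRev_append (L₁ L₂ : List (α × Bool)) :
    invRev (L₁ ++ L₂) = invRev L₂ ++ invRev L₁ := by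
  simp [invRev]

lemma invRev_singleton (q : α × Bool) : invRev [q] = [(q.1, !q.2)] := by
  simp [invRev]

/-- Cyclic decomposition of an element of a free group. -/
lemma cyclic_decomp (y : FreeGroup α) :
    ∃ g z : FreeGroup α, y = g * z * g⁻¹ ∧
      (∀ p ∈ z.toWord.getLast?, ∀ q ∈ z.toWord.head?, NR p q) ∧
      y.toWord = g.toWord ++ z.toWord ++ invRev g.toWord := by
  suffices H : ∀ n (y : FreeGroup α), norm y = n → ∃ g z : FreeGroup α, y = g * z * g⁻¹ ∧
      (∀ p ∈ z.toWord.getLast?, ∀ q ∈ z.toWord.head?, NR p q) ∧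
      y.toWord = g.toWord ++ z.toWord ++ invRev g.toWord from H _ y rfl
  intro n
  induction n using Nat.strong_induction_on with
  | _ n ih =>
    intro y hy
    by_cases hcyc : ∀ p ∈ y.toWord.getLast?, ∀ q ∈ y.toWord.head?, NR p q
    · refine ⟨1, y, by group, hcyc, ?_⟩
      simp [FreeGroup.toWord_one, invRev]
    · push_neg at hcyc
      obtain ⟨p, hp, q, hq, hnr⟩ := hcyc
      have hpq : p.1 = q.1 ∧ q.2 = !p.2 := not_not.mp hnr
      obtain ⟨t, hw⟩ := List.head?_eq_some_iff.mp hq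
      by_cases htne : t = []
      · subst htne
        rw [hw] at hp
        simp at hp
        rw [hp] at hpq
        simp at hpq
      · have hw2 : y.toWord = q :: (t.dropLast ++ [t.getLast htne]) := by
          rw [hw, List.dropLast_append_getLast htne]
        have hpl : p = t.getLast htne := by
          have h1 : y.toWord.getLast? = some (t.getLast htne) := by
            rw [hw2, ← List.cons_append, List.getLast?_concat]
          rw [h1] at hp
          exact (Option.some_inj.mp hp).symm
        have hp2 : p = (q.1, !q.2) := by
          refine Prod.ext hpq.1 ?_
          rw [hpq.2, Bool.not_not]
        set L := t.dropLast with hLdef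
        have hyw : y.toWord = [q] ++ L ++ [(q.1, !q.2)] := by
          rw [hw2, ← hpl, hp2]; simp
        have hLred : IsRed L :=
          isRed_infix (isRed_toWord y) ⟨[q], [(q.1, !q.2)], by rw [hyw]⟩
        have hLw : (mk L).toWord = L := toWord_mk_of_isRed hLred
        have hym : y = mk [q] * mk L * (mk [q])⁻¹ := by
          conv_lhs => rw [← FreeGroup.mk_toWord (x := y), hyw]
          rw [inv_mk, invRev_singleton, mul_mk, mul_mk]
        have hnormL : norm (mk L) < n := by
          rw [← hy, norm_eq_toWord_length, norm_eq_toWord_length, hLw, hyw]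
          simp
        obtain ⟨g', z, e', hcyc', etw'⟩ := ih (norm (mk L)) hnormL (mk L) rfl
        rw [hLw] at etw'
        refine ⟨mk [q] * g', z, ?_, hcyc', ?_⟩
        · rw [hym, e']
          group
        · have htwg : (mk [q] * g').toWord = [q] ++ g'.toWord := by
            have : mk [q] * g' = mk ([q] ++ g'.toWord) := by
              conv_lhs => rw [← FreeGroup.mk_toWord (x := g')]
              rw [mul_mk]
            rw [this]
            refine toWord_mk_of_isRed (isRed_infix (isRed_toWord y) ?_)
            exact ⟨[], z.toWord ++ invRev g'.toWord ++ [(q.1, !q.2)], by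
              rw [hyw, etw']; simp⟩
          rw [htwg, hyw, etw', invRev_append, invRev_singleton]
          simp


lemma conjPow {G : Type*} [Group G] (a b : G) : ∀ n : ℕ, (a * b * a⁻¹) ^ n = a * b ^ n * a⁻¹
  | 0 => by simp
  | n + 1 => by rw [pow_succ, conjPow a b n, pow_succ]; group

lemma norm_pow_decomp (y : FreeGroup α) (hy : y ≠ 1) :
    ∃ s t : ℕ, 0 < t ∧ norm y = 2 * s + t ∧ ∀ k, 1 ≤ k → norm (y ^ k) = 2 * s + k * t := by
  obtain ⟨g, z, e, hcyc, etw⟩ := cyclic_decomp y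
  set G := g.toWord with hG
  set Z := z.toWord with hZ
  have hzne : z ≠ 1 := by
    rintro rfl
    rw [mul_one, mul_inv_cancel] at e
    exact hy e
  have hZne : Z ≠ [] := fun hnil => hzne (FreeGroup.toWord_eq_nil_iff.mp hnil)
  refine ⟨G.length, Z.length, by
    simpa [List.length_pos_iff] using hZne, ?_, ?_⟩
  · rw [norm_eq_toWord_length, etw]
    simp [invRev_length]
    ring
  · intro k hk
    have hconj : y ^ k = g * z ^ k * g⁻¹ := by
      rw [e, conjPow]
    have hyk : y ^ k = mk (G ++ powWord Z k ++ invRev G) := by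
      rw [hconj]
      conv_lhs => rw [← FreeGroup.mk_toWord (x := g), ← FreeGroup.mk_toWord (x := z)]
      rw [← mk_powWord, ← hG, ← hZ, inv_mk, mul_mk, mul_mk]
    have hIG : IsRed G := isRed_toWord g
    have hIiG : IsRed (invRev G) := by
      rw [← FreeGroup.toWord_inv]
      exact isRed_toWord g⁻¹
    have hIP : IsRed (powWord Z k) := isRed_powWord (isRed_toWord z) hcyc k
    have hYred : IsRed (G ++ Z ++ invRev G) := by rw [← etw]; exact isRed_toWord y
    have hYred' : IsRed (G ++ (Z ++ invRev G)) := by rwa [← List.append_assoc]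
    have h1 := (List.isChain_append.mp hYred').2.2
    have h2 := (List.isChain_append.mp hYred).2.2
    have hred : IsRed (G ++ (powWord Z k ++ invRev G)) := by
      refine List.isChain_append.mpr ⟨hIG, List.isChain_append.mpr ⟨hIP, hIiG, ?_⟩, ?_⟩
      · intro p hp q hq
        refine h2 p ?_ q hq
        rwa [List.getLast?_append_of_ne_nil _ hZne, ← getLast?_powWord hZne hk]
      · intro p hp q hq
        refine h1 p hp q ?_
        rwa [List.head?_append_of_ne_nil _ (powWord_ne_nil hZne hk),
          head?_powWord hZne hk, ← List.head?_append_of_ne_nil _ hZne] at hq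
    rw [hyk, norm_eq_toWord_length, toWord_mk_of_isRed (by rwa [List.append_assoc])]
    simp [powWord_length, invRev_length]
    ring

lemma norm_le_norm_pow (y : FreeGroup α) {k : ℕ} (hk : 1 ≤ k) : norm y ≤ norm (y ^ k) := by
  by_cases hy : y = 1
  · subst hy; simp
  · obtain ⟨s, t, ht, h1, h2⟩ := norm_pow_decomp y hy
    rw [h1, h2 k hk]
    have : 1 * t ≤ k * t := Nat.mul_le_mul_right t hk
    omega

lemma le_norm_pow (y : FreeGroup α) (hy : y ≠ 1) (k : ℕ) : k ≤ norm (y ^ k) := by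
  rcases Nat.eq_zero_or_pos k with rfl | hk
  · simp
  · obtain ⟨s, t, ht, _, h2⟩ := norm_pow_decomp y hy
    rw [h2 k hk]
    have : k * 1 ≤ k * t := Nat.mul_le_mul_left k ht
    omega

lemma freeProj_of (n m : ℕ) (i : Fin m) :
    freeProj n m (FreeGroup.of i) =
      if h : (i : ℕ) < n then FreeGroup.of (⟨i, h⟩ : Fin n) else 1 := by
  simp [freeProj]

lemma freeProj_freeProj {n k m : ℕ} (hnk : n ≤ k) (w : FreeGroup (Fin m)) :
    freeProj n k (freeProj k m w) = freeProj n m w := by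
  have : (freeProj n k).comp (freeProj k m) = freeProj n m := by
    apply FreeGroup.ext_hom
    intro i
    rw [MonoidHom.comp_apply, freeProj_of, freeProj_of]
    by_cases h : (i : ℕ) < k
    · rw [dif_pos h, freeProj_of]
    · rw [dif_neg h, dif_neg (fun h' => h (lt_of_lt_of_le h' hnk)), _root_.map_one]
  exact DFunLike.congr_fun this w

lemma freeProj_self (m : ℕ) (w : FreeGroup (Fin m)) : freeProj m m w = w := by
  have : freeProj m m = MonoidHom.id (FreeGroup (Fin m)) := by
    apply FreeGroup.ext_hom
    intro i
    rw [freeProj_of, dif_pos i.isLt]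
    simp
  rw [this, MonoidHom.id_apply]

/-- The section of `projG m`. -/
def secG (m : ℕ) : FreeGroup (Fin m) →* GOmega :=
  MonoidHom.codRestrict (Pi.monoidHom (fun n => freeProj n m)) GOmega
    (fun w n k hnk => freeProj_freeProj hnk w)

lemma projG_secG (m : ℕ) (w : FreeGroup (Fin m)) : projG m (secG m w) = w :=
  freeProj_self m w

lemma projG_apply (m : ℕ) (g : GOmega) : projG m g = (g : (n : ℕ) → FreeGroup (Fin n)) m := rfl

lemma val_one_of_le {g : GOmega} {m : ℕ} (hm : (g : (n : ℕ) → FreeGroup (Fin n)) m = 1)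
    {j : ℕ} (hj : j ≤ m) : (g : (n : ℕ) → FreeGroup (Fin n)) j = 1 := by
  rw [← g.2 j m hj, hm, _root_.map_one]

/-- If `h` does not factor through `projG m` for any `m`, we can find witnesses. -/
lemma exists_witness {F : Type*} [Group F] (h : GOmega →* F)
    (hcon : ∀ (m : ℕ) (hbar : FreeGroup (Fin m) →* F), h ≠ hbar.comp (projG m)) (m : ℕ) :
    ∃ x : GOmega, projG m x = 1 ∧ h x ≠ 1 := by
  by_contra hc
  push_neg at hc
  apply hcon m (h.comp (secG m))
  ext g
  rw [MonoidHom.comp_apply, MonoidHom.comp_apply]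
  have key : h (secG m (projG m g) * g⁻¹) = 1 := by
    apply hc
    rw [_root_.map_mul, _root_.map_inv, projG_secG, mul_inv_cancel]
  rw [_root_.map_mul, _root_.map_inv] at key
  have := mul_inv_eq_one.mp key
  exact this.symm


/-- Coordinates of the infinite nested word `q_n = (x_n q_{n+1})^{k_n}`. -/
def QAux (x : ℕ → GOmega) (k : ℕ → ℕ) : ℕ → ℕ → (j : ℕ) → FreeGroup (Fin j)
  | 0, _, _ => 1
  | d + 1, n, j => ((x n : (i : ℕ) → FreeGroup (Fin i)) j * QAux x k d (n + 1) j) ^ (k n)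

def Qc (x : ℕ → GOmega) (k : ℕ → ℕ) (n j : ℕ) : FreeGroup (Fin j) := QAux x k (j - n) n j

variable (x : ℕ → GOmega) (k : ℕ → ℕ)

lemma Qc_of_le {n j : ℕ} (h : j ≤ n) : Qc x k n j = 1 := by
  rw [Qc, Nat.sub_eq_zero_of_le h]
  rfl

lemma Qc_of_lt {n j : ℕ} (h : n < j) :
    Qc x k n j = ((x n : (i : ℕ) → FreeGroup (Fin i)) j * Qc x k (n + 1) j) ^ (k n) := by
  rw [Qc, show j - n = (j - (n + 1)) + 1 by omega]
  rfl

lemma Qc_thread (hx : ∀ m, projG m (x m) = 1) :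
    ∀ d n i j, j - n ≤ d → i ≤ j → freeProj i j (Qc x k n j) = Qc x k n i := by
  intro d
  induction d with
  | zero =>
    intro n i j hd hij
    have hjn : j ≤ n := by omega
    rw [Qc_of_le x k hjn, Qc_of_le x k (le_trans hij hjn), _root_.map_one]
  | succ d ih =>
    intro n i j hd hij
    by_cases hjn : j ≤ n
    · rw [Qc_of_le x k hjn, Qc_of_le x k (le_trans hij hjn), _root_.map_one]
    · push_neg at hjn
      rw [Qc_of_lt x k hjn, _root_.map_pow, _root_.map_mul, (x n).2 i j hij,
        ih (n + 1) i j (by omega) hij]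
      by_cases hin : i ≤ n
      · rw [Qc_of_le x k hin, Qc_of_le x k (by omega : i ≤ n + 1),
          val_one_of_le (hx n) hin]
        simp
      · rw [Qc_of_lt x k (by omega : n < i)]

variable (hx : ∀ m, projG m (x m) = 1)

/-- The nested words as elements of `GOmega`. -/
def qq (n : ℕ) : GOmega :=
  ⟨fun j => Qc x k n j, fun i j hij => Qc_thread x k hx (j - n) n i j le_rfl hij⟩

lemma qq_succ (n : ℕ) : qq x k hx n = (x n * qq x k hx (n + 1)) ^ (k n) := by
  apply Subtype.ext
  funext j
  have hco : ((((x n * qq x k hx (n + 1)) ^ (k n)) : GOmega) : (i : ℕ) → FreeGroup (Fin i)) j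
      = ((x n : (i : ℕ) → FreeGroup (Fin i)) j * Qc x k (n + 1) j) ^ (k n) := by
    rfl
  rw [hco]
  show Qc x k n j = _
  by_cases hnj : n < j
  · rw [Qc_of_lt x k hnj]
  · push_neg at hnj
    rw [Qc_of_le x k hnj, Qc_of_le x k (by omega : j ≤ n + 1),
      val_one_of_le (hx n) hnj]
    simp

end HigmanAux

/-- **Lemma 3.2** (Higman; [Scott, Theorem 1]): every homomorphism from the unrestricted
free product `𝒢_ω` to a free group factors through one of the canonical projections
`p_m : 𝒢_ω → ∗_{i<m} ℤ_i`. -/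
theorem hom_from_GOmega_factors (F : Type) [Group F] [IsFreeGroup F]
    (h : GOmega →* F) :
    ∃ (m : ℕ) (hbar : FreeGroup (Fin m) →* F), h = hbar.comp (projG m) := by
  classical
  by_contra hcon
  push_neg at hcon
  choose x hx1 hx2 using fun m => HigmanAux.exists_witness h hcon m
  set β := IsFreeGroup.Generators F with hβ
  letI : DecidableEq β := Classical.decEq β
  set e : F ≃* FreeGroup β := IsFreeGroup.toFreeGroup F with he
  set h' : GOmega →* FreeGroup β := e.toMonoidHom.comp h with hh'
  set a : ℕ → FreeGroup β := fun n => h' (x n) with ha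
  have ha1 : ∀ n, a n ≠ 1 := by
    intro n hn
    apply hx2 n
    have h1 : e (h (x n)) = e 1 := by
      rw [map_one]
      exact hn
    exact e.injective h1
  set k : ℕ → ℕ := fun n => n + 1 + ∑ i ∈ Finset.range n, FreeGroup.norm (a i) with hk
  have hk1 : ∀ n, 1 ≤ k n := fun n => by simp only [hk]; omega
  set c : ℕ → FreeGroup β := fun n => h' (HigmanAux.qq x k hx1 n) with hc
  have crec : ∀ n, c n = (a n * c (n + 1)) ^ (k n) := by
    intro n
    show h' (HigmanAux.qq x k hx1 n) = _
    rw [HigmanAux.qq_succ, map_pow, map_mul]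
  have BND : ∀ n, FreeGroup.norm (c n) ≤
      FreeGroup.norm (c 0) + ∑ i ∈ Finset.range n, FreeGroup.norm (a i) := by
    intro n
    induction n with
    | zero => simp
    | succ n ih =>
      have e1 : c (n + 1) = (a n)⁻¹ * (a n * c (n + 1)) := by group
      have e2 : FreeGroup.norm (c (n + 1)) ≤
          FreeGroup.norm (a n) + FreeGroup.norm (a n * c (n + 1)) := by
        conv_lhs => rw [e1]
        calc FreeGroup.norm ((a n)⁻¹ * (a n * c (n + 1)))
            ≤ FreeGroup.norm (a n)⁻¹ + FreeGroup.norm (a n * c (n + 1)) :=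
              FreeGroup.norm_mul_le _ _
          _ = FreeGroup.norm (a n) + FreeGroup.norm (a n * c (n + 1)) := by
              rw [FreeGroup.norm_inv_eq]
      have e3 : FreeGroup.norm (a n * c (n + 1)) ≤ FreeGroup.norm (c n) := by
        conv_rhs => rw [crec n]
        exact HigmanAux.norm_le_norm_pow _ (hk1 n)
      rw [Finset.sum_range_succ]
      omega
  have FORCE : ∀ n, FreeGroup.norm (c 0) ≤ n → a n * c (n + 1) = 1 := by
    intro n hn
    by_contra hne
    have h1 : k n ≤ FreeGroup.norm (c n) := by
      conv_rhs => rw [crec n]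
      exact HigmanAux.le_norm_pow _ hne (k n)
    have h2 := BND n
    have h3 : k n = n + 1 + ∑ i ∈ Finset.range n, FreeGroup.norm (a i) := rfl
    omega
  have E1 : a (FreeGroup.norm (c 0)) * c (FreeGroup.norm (c 0) + 1) = 1 :=
    FORCE _ le_rfl
  have E2 : c (FreeGroup.norm (c 0) + 1) = 1 := by
    rw [crec (FreeGroup.norm (c 0) + 1), FORCE (FreeGroup.norm (c 0) + 1) (by omega), one_pow]
  rw [E2, mul_one] at E1
  exact ha1 _ E1

end
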